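/- Let π be a one-block factor code from a one-step SFT X to a sofic shift Y, with f = max_{w ∈ 𝒜(Y)} |π_b^{-1}(w)|, and let A, B ⊆ 𝒜(X). If A pairs with B in form γ (i.e., there exists a Y-block W of length n+1 with π_b^{-1}(W)_0 = A, π_b^{-1}(W)_n = B, and P_W(A,B) = γ), then there exists such a block of length at most |𝒜(Y)| · 2^{f² + f} + 1 realizing the same form γ. -/

import Mathlib

open List

/-- `U` is a (nonempty) block of the one-step SFT `X` determined by the
transition relation `TX`. -/
def IsXBlock {AX : Type*} (TX : AX → AX → Prop) (U : List AX) : Prop :=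
  U ≠ [] ∧ U.Chain' TX

/-- The set of `X`-blocks mapping (symbol-wise, via `πb`) to the word `W`. -/
def preim {AX AY : Type*} (TX : AX → AX → Prop) (πb : AX → AY) (W : List AY) :
    Set (List AX) :=
  {U | IsXBlock TX U ∧ U.map πb = W}

/-- `W` is a block of the sofic shift `Y = π(X)`. -/
def IsYBlock {AX AY : Type*} (TX : AX → AX → Prop) (πb : AX → AY) (W : List AY) : Prop :=
  (preim TX πb W).Nonempty

/-- `π_b^{-1}(W)_i`: the symbols occurring at position `i` in some preimage block of `W`. -/
def preimAt {AX AY : Type*} (TX : AX → AX → Prop) (πb : AX → AY) (W : List AY) (i : ℕ) :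
    Set AX :=
  {a | ∃ U ∈ preim TX πb W, U[i]? = some a}

/-- The `W`-pairing: the set of (first symbol, last symbol) pairs realized by
preimage blocks of `W`. -/
def pairing {AX AY : Type*} (TX : AX → AX → Prop) (πb : AX → AY) (W : List AY) :
    Set (AX × AX) :=
  {p | ∃ U ∈ preim TX πb W, U.head? = some p.1 ∧ U.getLast? = some p.2}

/-- `U ∈ π_b^{-1}(W)` is routable through `a` at time `n`. -/
def Routable {AX AY : Type*} (TX : AX → AX → Prop) (πb : AX → AY) (W : List AY) (n : ℕ)
    (a : AX) (U : List AX) : Prop :=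
  ∃ U' ∈ preim TX πb W, U'.head? = U.head? ∧ U'[n]? = some a ∧ U'.getLast? = U.getLast?

/-- `(W, n, M)` is a transition block. -/
def IsTransBlock {AX AY : Type*} (TX : AX → AX → Prop) (πb : AX → AY) (W : List AY)
    (n : ℕ) (M : Finset AX) : Prop :=
  IsYBlock TX πb W ∧ 0 < n ∧ n < W.length - 1 ∧
    (∀ a ∈ M, a ∈ preimAt TX πb W n) ∧
    ∀ U ∈ preim TX πb W, ∃ a ∈ M, Routable TX πb W n a U

/-- The fiber `π_b^{-1}(b)` of a `Y`-symbol. -/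
def fiber {AX AY : Type*} [Fintype AX] [DecidableEq AY] (πb : AX → AY) (b : AY) :
    Finset AX :=
  Finset.univ.filter (fun a => πb a = b)

/-- `f = max_{w ∈ 𝒜(Y)} |π_b^{-1}(w)|`. -/
def fMax {AX AY : Type*} [Fintype AX] [Fintype AY] [DecidableEq AY] (πb : AX → AY) : ℕ :=
  Finset.univ.sup (fun b : AY => (fiber πb b).card)

section Helpers

variable {AX AY : Type*} {TX : AX → AX → Prop} {πb : AX → AY}

lemma preim_length {W : List AY} {U : List AX} (h : U ∈ preim TX πb W) :
    U.length = W.length := by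
  have := congrArg List.length h.2
  simpa using this

lemma pairing_nonempty {W : List AY} (h : (preim TX πb W).Nonempty) :
    (pairing TX πb W).Nonempty := by
  obtain ⟨U, hU⟩ := h
  have hne : U ≠ [] := hU.1.1
  exact ⟨(U.head hne, U.getLast hne), U, hU, List.head?_eq_head hne,
    List.getLast?_eq_getLast hne⟩

lemma preimAt_zero (TX : AX → AX → Prop) (πb : AX → AY) (W : List AY) :
    preimAt TX πb W 0 = Prod.fst '' pairing TX πb W := by
  ext a
  constructor
  · rintro ⟨U, hU, h0⟩
    have hne : U ≠ [] := hU.1.1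
    exact ⟨(a, U.getLast hne), ⟨U, hU, by rw [List.head?_eq_getElem?]; exact h0,
      List.getLast?_eq_getLast hne⟩, rfl⟩
  · rintro ⟨⟨a', b⟩, ⟨U, hU, hh, hl⟩, rfl⟩
    exact ⟨U, hU, by rw [← List.head?_eq_getElem?]; exact hh⟩

lemma preimAt_last (TX : AX → AX → Prop) (πb : AX → AY) (W : List AY) :
    preimAt TX πb W (W.length - 1) = Prod.snd '' pairing TX πb W := by
  ext b
  constructor
  · rintro ⟨U, hU, hl⟩
    have hne : U ≠ [] := hU.1.1
    refine ⟨(U.head hne, b), ⟨U, hU, List.head?_eq_head hne, ?_⟩, rfl⟩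
    rw [List.getLast?_eq_getElem?, preim_length hU]
    exact hl
  · rintro ⟨⟨a, b'⟩, ⟨U, hU, hh, hl⟩, rfl⟩
    refine ⟨U, hU, ?_⟩
    rw [← preim_length hU, ← List.getLast?_eq_getElem?]
    exact hl

lemma pairing_append_subset {W1 W2 : List AY}
    (hne1 : W1 ≠ []) (h : pairing TX πb W1 ⊆ pairing TX πb W2) (V : List AY) :
    pairing TX πb (W1 ++ V) ⊆ pairing TX πb (W2 ++ V) := by
  rintro ⟨s, t⟩ ⟨U, ⟨⟨hUne, hUch⟩, hUmap⟩, hhead, hlast⟩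
  have hlen : U.length = W1.length + V.length := by
    have := congrArg List.length hUmap
    simpa using this
  have hW1pos : 0 < W1.length := List.length_pos_iff.mpr hne1
  set n := W1.length with hn
  have hn1lt : n - 1 < U.length := by omega
  have hU1len : (U.take n).length = n := by rw [List.length_take]; omega
  have hU1 : U.take n ∈ preim TX πb W1 := by
    refine ⟨⟨?_, hUch.take n⟩, ?_⟩
    · intro hc; rw [hc] at hU1len; simp at hU1len; omega
    · rw [List.map_take, hUmap, hn]; exact List.take_left (l₁ := W1) (l₂ := V)
  have hU1head : (U.take n).head? = some s := by
    rw [List.head?_eq_getElem?, List.getElem?_take_of_lt hW1pos, ← List.head?_eq_getElem?]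
    exact hhead
  have hU1last : (U.take n).getLast? = some (U[n-1]'hn1lt) := by
    rw [List.getLast?_eq_getElem?, hU1len, List.getElem?_take_of_lt (by omega)]
    exact List.getElem?_eq_getElem hn1lt
  have hp2 : (s, U[n-1]'hn1lt) ∈ pairing TX πb W2 :=
    h ⟨U.take n, hU1, hU1head, hU1last⟩
  obtain ⟨P, hP, hPhead, hPlast⟩ := hp2
  by_cases hV : V = []
  · subst hV
    have hUlen : U.length = n := by simpa using hlen
    have ht : some t = some (U[n-1]'hn1lt) := by
      rw [← hlast, List.getLast?_eq_getElem?, hUlen]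
      exact (List.getElem?_eq_getElem hn1lt)
    refine ⟨P, by simpa using hP, hPhead, ?_⟩
    rw [hPlast, ← ht]
  · have hVpos : 0 < V.length := List.length_pos_iff.mpr hV
    have hnlt : n < U.length := by omega
    have hU2 : U.drop n ∈ preim TX πb V := by
      refine ⟨⟨?_, hUch.drop n⟩, ?_⟩
      · intro hc
        have := congrArg List.length hc
        simp [List.length_drop] at this
        omega
      · rw [List.map_drop, hUmap, hn]; exact List.drop_left (l₁ := W1) (l₂ := V)
    have hjun : TX (U[n-1]'hn1lt) (U[n]'hnlt) := by
      have hch := List.isChain_iff_getElem.mp hUch (n-1) (by omega)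
      have e : n - 1 + 1 = n := by omega
      simpa [List.get_eq_getElem, e] using hch
    have hPne : P ≠ [] := hP.1.1
    have hdroplast : (U.drop n).getLast? = some t := by
      rw [List.getLast?_eq_getElem?, List.length_drop, List.getElem?_drop]
      have e : n + (U.length - n - 1) = U.length - 1 := by omega
      rw [e, ← List.getLast?_eq_getElem?]
      exact hlast
    refine ⟨P ++ U.drop n, ⟨⟨by simp [hPne], ?_⟩, ?_⟩, ?_, ?_⟩
    · refine List.isChain_append.mpr ⟨hP.1.2, hUch.drop n, ?_⟩
      intro x hx y hy
      have hx' : x = U[n-1]'hn1lt := by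
        rw [hPlast] at hx
        exact Option.some.inj (Eq.symm hx)
      have hy' : y = U[n]'hnlt := by
        rw [List.head?_drop, List.getElem?_eq_getElem hnlt] at hy
        exact Option.some.inj (Eq.symm hy)
      rw [hx', hy']
      exact hjun
    · rw [List.map_append, hP.2, hU2.2]
    · rw [List.head?_append, hPhead]; rfl
    · rw [List.getLast?_append, hdroplast]; rfl

lemma pairing_append_congr {W1 W2 : List AY} (hne1 : W1 ≠ []) (hne2 : W2 ≠ [])
    (h : pairing TX πb W1 = pairing TX πb W2) (V : List AY) :
    pairing TX πb (W1 ++ V) = pairing TX πb (W2 ++ V) :=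
  Set.Subset.antisymm (pairing_append_subset hne1 h.le V)
    (pairing_append_subset hne2 h.ge V)

lemma mem_fiber [Fintype AX] [DecidableEq AY] {a : AX} {d : AY} :
    a ∈ fiber πb d ↔ πb a = d := by simp [fiber]

lemma pairing_take_fiber [Fintype AX] [DecidableEq AY] {W : List AY} {k : ℕ}
    (hk : k < W.length) {x y : AX}
    (hxy : (x, y) ∈ pairing TX πb (W.take (k+1))) :
    πb x = W[0]'(by omega) ∧ πb y = W[k] := by
  obtain ⟨U, ⟨⟨hUne, _⟩, hUmap⟩, hhead, hlast⟩ := hxy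
  constructor
  · have h := congrArg List.head? hUmap
    rw [List.head?_map, hhead] at h
    rw [List.head?_eq_getElem?, List.getElem?_take_of_lt (by omega),
      List.getElem?_eq_getElem (by omega : 0 < W.length)] at h
    exact Option.some.inj h
  · have h := congrArg List.getLast? hUmap
    rw [List.getLast?_map, hlast] at h
    rw [List.getLast?_eq_getElem?, List.length_take] at h
    have hmin : min (k+1) W.length - 1 = k := by omega
    rw [hmin, List.getElem?_take_of_lt (by omega), List.getElem?_eq_getElem hk] at h
    exact Option.some.inj h

end Helpers

lemma shorten {AX AY : Type*} [Fintype AX] [Fintype AY] [DecidableEq AX] [DecidableEq AY]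
    (TX : AX → AX → Prop) (πb : AX → AY) (W : List AY) (hW : IsYBlock TX πb W) :
    ∃ W' : List AY, IsYBlock TX πb W' ∧ pairing TX πb W' = pairing TX πb W ∧
      W'.length ≤ Fintype.card AY * 2 ^ ((fMax πb) ^ 2 + fMax πb) + 1 := by
  classical
  set f := fMax πb with hf
  set N := Fintype.card AY * 2 ^ (f ^ 2 + f) with hN
  suffices h : ∀ L (W : List AY), W.length = L → IsYBlock TX πb W →
      ∃ W' : List AY, IsYBlock TX πb W' ∧ pairing TX πb W' = pairing TX πb W ∧
        W'.length ≤ N + 1 from h W.length W rfl hW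
  intro L
  induction L using Nat.strong_induction_on with
  | _ L ih =>
  intro W hL hW
  by_cases hle : W.length ≤ N + 1
  · exact ⟨W, hW, rfl, hle⟩
  push_neg at hle
  have h0lt : 0 < W.length := by omega
  have hWne : W ≠ [] := by
    intro h; rw [h] at h0lt; simp at h0lt
  set c := W[0]'h0lt with hc
  have hfiber_card : ∀ d : AY, (fiber πb d).card ≤ f := by
    intro d
    rw [hf, fMax]
    exact Finset.le_sup (f := fun b : AY => (fiber πb b).card) (Finset.mem_univ d)
  set g : Fin W.length → AY × Finset (AX × AX) :=
    fun i => (W[(i:ℕ)], ((fiber πb c) ×ˢ (fiber πb (W[(i:ℕ)]))).filter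
      (· ∈ pairing TX πb (W.take ((i:ℕ)+1)))) with hg
  set t : Finset (AY × Finset (AX × AX)) :=
    Finset.univ.biUnion (fun d : AY => {d} ×ˢ ((fiber πb c) ×ˢ (fiber πb d)).powerset) with ht
  have hmaps : ∀ i : Fin W.length, g i ∈ t := by
    intro i
    rw [ht]
    rw [Finset.mem_biUnion]
    refine ⟨W[(i:ℕ)], Finset.mem_univ _, ?_⟩
    rw [Finset.mem_product]
    exact ⟨Finset.mem_singleton_self _, Finset.mem_powerset.mpr (Finset.filter_subset _ _)⟩
  have htcard : t.card ≤ N := by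
    calc t.card ≤ ∑ d : AY, ({d} ×ˢ ((fiber πb c) ×ˢ (fiber πb d)).powerset).card :=
          Finset.card_biUnion_le
      _ ≤ ∑ _d : AY, 2 ^ (f ^ 2 + f) := by
          apply Finset.sum_le_sum
          intro d _
          rw [Finset.card_product, Finset.card_singleton, one_mul, Finset.card_powerset,
            Finset.card_product]
          apply Nat.pow_le_pow_right (by norm_num)
          have h1 := hfiber_card c
          have h2 := hfiber_card d
          calc (fiber πb c).card * (fiber πb d).card ≤ f * f := Nat.mul_le_mul h1 h2
            _ ≤ f ^ 2 + f := by nlinarith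
      _ = Fintype.card AY * 2 ^ (f ^ 2 + f) := by
          rw [Finset.sum_const, Finset.card_univ, smul_eq_mul]
  have hcard_lt : t.card < (Finset.univ : Finset (Fin W.length)).card := by
    rw [Finset.card_univ, Fintype.card_fin]; omega
  obtain ⟨i0, -, j0, -, hij0, hgij0⟩ :=
    Finset.exists_ne_map_eq_of_card_lt_of_maps_to hcard_lt (fun i _ => hmaps i)
  obtain ⟨i, j, hij, hgij⟩ : ∃ i j : Fin W.length, (i:ℕ) < (j:ℕ) ∧ g i = g j := by
    rcases lt_or_gt_of_ne hij0 with hlt | hlt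
    · exact ⟨i0, j0, hlt, hgij0⟩
    · exact ⟨j0, i0, hlt, hgij0.symm⟩
  have hWij : W[(i:ℕ)] = W[(j:ℕ)] := congrArg Prod.fst hgij
  have hRij : (g i).2 = (g j).2 := congrArg Prod.snd hgij
  have hpair : pairing TX πb (W.take ((i:ℕ)+1)) = pairing TX πb (W.take ((j:ℕ)+1)) := by
    ext ⟨x, y⟩
    constructor
    · intro hxy
      obtain ⟨hx, hy⟩ := pairing_take_fiber i.isLt hxy
      have hmem : (x, y) ∈ (g i).2 := by
        rw [hg]
        simp only [Finset.mem_filter, Finset.mem_product]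
        exact ⟨⟨mem_fiber.mpr hx, mem_fiber.mpr hy⟩, hxy⟩
      rw [hRij, hg] at hmem
      simp only [Finset.mem_filter] at hmem
      exact hmem.2
    · intro hxy
      obtain ⟨hx, hy⟩ := pairing_take_fiber j.isLt hxy
      have hmem : (x, y) ∈ (g j).2 := by
        rw [hg]
        simp only [Finset.mem_filter, Finset.mem_product]
        exact ⟨⟨mem_fiber.mpr hx, mem_fiber.mpr hy⟩, hxy⟩
      rw [← hRij, hg] at hmem
      simp only [Finset.mem_filter] at hmem
      exact hmem.2
  have htake_ne : ∀ k : ℕ, W.take (k+1) ≠ [] := by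
    intro k hk
    have h := List.take_eq_nil_iff.mp hk
    simp [hWne] at h
  set W' := W.take ((i:ℕ)+1) ++ W.drop ((j:ℕ)+1) with hW'
  have hpairW' : pairing TX πb W' = pairing TX πb W := by
    calc pairing TX πb W'
        = pairing TX πb (W.take ((j:ℕ)+1) ++ W.drop ((j:ℕ)+1)) :=
          pairing_append_congr (htake_ne _) (htake_ne _) hpair _
      _ = pairing TX πb W := by rw [List.take_append_drop]
  have hYW' : IsYBlock TX πb W' := by
    obtain ⟨p, hp⟩ := pairing_nonempty hW
    rw [← hpairW'] at hp
    obtain ⟨U, hU, -, -⟩ := hp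
    exact ⟨U, hU⟩
  have hlen' : W'.length < W.length := by
    rw [hW']
    rw [List.length_append, List.length_take, List.length_drop]
    have hjlt : (j:ℕ) < W.length := j.isLt
    omega
  obtain ⟨W'', hY'', hp'', hlen''⟩ := ih W'.length (by rw [← hL]; exact hlen') W' rfl hYW'
  exact ⟨W'', hY'', hp''.trans hpairW', hlen''⟩


/-- If `A` pairs with `B` in form `γ`, then a block of length at most
`|𝒜(Y)| · 2 ^ (f² + f) + 1` realizes the same form `γ`. -/
theorem pairing_form_short {AX AY : Type*}
    [Fintype AX] [Fintype AY] [DecidableEq AX] [DecidableEq AY]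
    (TX : AX → AX → Prop) (πb : AX → AY)
    (A B : Set AX) (γ : Set (AX × AX)) (W : List AY)
    (hW : IsYBlock TX πb W)
    (h0 : preimAt TX πb W 0 = A) (h1 : preimAt TX πb W (W.length - 1) = B)
    (hγ : pairing TX πb W = γ) :
    ∃ W' : List AY, IsYBlock TX πb W' ∧
      preimAt TX πb W' 0 = A ∧
      preimAt TX πb W' (W'.length - 1) = B ∧
      pairing TX πb W' = γ ∧
      W'.length ≤ Fintype.card AY * 2 ^ ((fMax πb) ^ 2 + fMax πb) + 1 := by
  obtain ⟨W', hY', hp', hlen'⟩ := shorten TX πb W hW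
  refine ⟨W', hY', ?_, ?_, hp'.trans hγ, hlen'⟩
  · rw [preimAt_zero, hp', ← preimAt_zero, h0]
  · rw [preimAt_last, hp', ← preimAt_last, h1]
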